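/- Let K₁ and K₂ be real symmetric n×n matrices all of whose eigenvalues are at least λ₀ > 0, let Y, u₀, v₀ ∈ ℝⁿ, and define the two kernel gradient flow trajectories u(t) = Y + exp(-(t/n)K₁)(u₀ - Y) and v(t) = Y + exp(-(t/n)K₂)(v₀ - Y). Then sup_{t ≥ 0} ‖u(t) - v(t)‖₂ ≤ ‖u₀ - v₀‖₂ + (1/(e·λ₀))·‖K₁ - K₂‖·‖u₀ - Y‖₂, where ‖K₁ - K₂‖ is the operator norm with respect to the Euclidean norm. -/

import Mathlib

set_option maxHeartbeats 1000000
set_option synthInstance.maxHeartbeats 400000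

open Matrix

/-- The Euclidean norm on `ℝⁿ`. -/
noncomputable def eNorm {n : ℕ} (v : Fin n → ℝ) : ℝ :=
  Real.sqrt (∑ i, v i ^ 2)

/-- The operator norm of a matrix with respect to the Euclidean norm:
`sup {‖Mv‖₂ : ‖v‖₂ ≤ 1}`. -/
noncomputable def opNorm {n : ℕ} (M : Matrix (Fin n) (Fin n) ℝ) : ℝ :=
  sSup {c : ℝ | ∃ v : Fin n → ℝ, eNorm v ≤ 1 ∧ c = eNorm (M.mulVec v)}

section Aux

variable {n : ℕ}

open scoped Matrix.Norms.L2Operator in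
lemma phi_exp (M : Matrix (Fin n) (Fin n) ℝ) :
    Matrix.toEuclideanCLM (n := Fin n) (𝕜 := ℝ) (NormedSpace.exp M)
      = NormedSpace.exp (Matrix.toEuclideanCLM (n := Fin n) (𝕜 := ℝ) M) := by
  have hc : Continuous (Matrix.toEuclideanCLM (n := Fin n) (𝕜 := ℝ)) := by
    have h2 : (⇑(Matrix.toEuclideanCLM (n := Fin n) (𝕜 := ℝ)))
        = ⇑(((Matrix.toEuclideanLin (𝕜 := ℝ) (m := Fin n) (n := Fin n)).trans
            LinearMap.toContinuousLinearMap).toLinearMap) := rfl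
    rw [h2]
    exact LinearMap.continuous_of_finiteDimensional _
  exact NormedSpace.map_exp_of_mem_ball (𝕂 := ℝ) (Matrix.toEuclideanCLM (n := Fin n) (𝕜 := ℝ)) hc M
    ((NormedSpace.expSeries_radius_eq_top ℝ (Matrix (Fin n) (Fin n) ℝ)).symm ▸ edist_lt_top _ _)

lemma eNorm_eq (v : Fin n → ℝ) : eNorm v = ‖(WithLp.equiv 2 (Fin n → ℝ)).symm v‖ := by
  rw [eNorm, EuclideanSpace.norm_eq]
  congr 1
  exact Finset.sum_congr rfl fun i _ => by
    simp [WithLp.equiv_symm_apply, PiLp.toLp_apply, Real.norm_eq_abs, sq_abs]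

lemma iota_mulVec (M : Matrix (Fin n) (Fin n) ℝ) (w : Fin n → ℝ) :
    (WithLp.equiv 2 (Fin n → ℝ)).symm (M.mulVec w)
      = Matrix.toEuclideanCLM (n := Fin n) (𝕜 := ℝ) M ((WithLp.equiv 2 (Fin n → ℝ)).symm w) := by
  simp [WithLp.equiv_symm_apply, Matrix.toEuclideanCLM_toLp]

lemma opNorm_eq (M : Matrix (Fin n) (Fin n) ℝ) :
    opNorm M = ‖Matrix.toEuclideanCLM (n := Fin n) (𝕜 := ℝ) M‖ := by
  rw [opNorm, ← ContinuousLinearMap.sSup_unitClosedBall_eq_norm]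
  congr 1
  ext c
  constructor
  · rintro ⟨v, hv, rfl⟩
    refine ⟨(WithLp.equiv 2 (Fin n → ℝ)).symm v, ?_, ?_⟩
    · rw [Metric.mem_closedBall, dist_zero_right, ← eNorm_eq]; exact hv
    · rw [eNorm_eq, iota_mulVec]
  · rintro ⟨x, hx, rfl⟩
    refine ⟨WithLp.equiv 2 (Fin n → ℝ) x, ?_, ?_⟩
    · rw [eNorm_eq, Equiv.symm_apply_apply]
      exact mem_closedBall_zero_iff.mp hx
    · rw [eNorm_eq, iota_mulVec, Equiv.symm_apply_apply]

lemma phi_isometry (U : Matrix (Fin n) (Fin n) ℝ) (hU : star U * U = 1)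
    (x : EuclideanSpace ℝ (Fin n)) :
    ‖Matrix.toEuclideanCLM (n := Fin n) (𝕜 := ℝ) U x‖ = ‖x‖ := by
  set T := Matrix.toEuclideanCLM (n := Fin n) (𝕜 := ℝ) U with hT
  have h2 : star T * T = 1 := by
    rw [hT, ← map_star, ← _root_.map_mul, hU, _root_.map_one]
  have h1 : (ContinuousLinearMap.adjoint T) (T x) = x := by
    rw [← ContinuousLinearMap.star_eq_adjoint]
    calc (star T) (T x) = (star T * T) x := rfl
      _ = x := by rw [h2]; rfl
  have h3 : (inner ℝ (T x) (T x) : ℝ) = inner ℝ x x := by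
    rw [← ContinuousLinearMap.adjoint_inner_left, h1]
  rw [real_inner_self_eq_norm_mul_norm, real_inner_self_eq_norm_mul_norm] at h3
  exact (mul_self_inj_of_nonneg (norm_nonneg _) (norm_nonneg _)).mp h3

lemma phi_unitary_norm_le (U : Matrix (Fin n) (Fin n) ℝ) (hU : star U * U = 1) :
    ‖Matrix.toEuclideanCLM (n := Fin n) (𝕜 := ℝ) U‖ ≤ 1 :=
  ContinuousLinearMap.opNorm_le_bound _ zero_le_one fun x => by
    rw [phi_isometry U hU x, one_mul]

lemma phi_diagonal_norm_le (d : Fin n → ℝ) (c : ℝ) (hc : 0 ≤ c) (hd : ∀ i, |d i| ≤ c) :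
    ‖Matrix.toEuclideanCLM (n := Fin n) (𝕜 := ℝ) (Matrix.diagonal d)‖ ≤ c := by
  refine ContinuousLinearMap.opNorm_le_bound _ hc fun x => ?_
  have hx : x = (WithLp.equiv 2 (Fin n → ℝ)).symm (WithLp.equiv 2 (Fin n → ℝ) x) :=
    (Equiv.symm_apply_apply _ _).symm
  rw [hx, ← iota_mulVec, ← eNorm_eq, ← eNorm_eq]
  set v := WithLp.equiv 2 (Fin n → ℝ) x
  rw [eNorm, eNorm, ← Real.sqrt_sq hc, ← Real.sqrt_mul (sq_nonneg c)]
  refine Real.sqrt_le_sqrt ?_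
  rw [Finset.mul_sum]
  refine Finset.sum_le_sum fun i _ => ?_
  rw [Matrix.mulVec_diagonal]
  have h1 := hd i
  have h2 := abs_nonneg (d i)
  have h3 : d i ^ 2 ≤ c ^ 2 := by nlinarith [mul_self_le_mul_self h2 h1, sq_abs (d i)]
  nlinarith [mul_le_mul_of_nonneg_right h3 (sq_nonneg (v i))]

lemma norm_exp_neg_smul_le (K : Matrix (Fin n) (Fin n) ℝ) (hK : K.IsHermitian) (lam0 : ℝ)
    (hmin : ∀ i, lam0 ≤ hK.eigenvalues i) (r : ℝ) (hr : 0 ≤ r) :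
    ‖NormedSpace.exp ((-r) • (Matrix.toEuclideanCLM (n := Fin n) (𝕜 := ℝ) K))‖
      ≤ Real.exp (-(r * lam0)) := by
  rw [← _root_.map_smul, ← phi_exp]
  set U := hK.eigenvectorUnitary with hUdef
  set u : (Matrix (Fin n) (Fin n) ℝ)ˣ := Unitary.toUnits U with hudef
  have hu1 : (↑u : Matrix (Fin n) (Fin n) ℝ) = ↑U := rfl
  have hu2 : (↑u⁻¹ : Matrix (Fin n) (Fin n) ℝ) = star (↑U : Matrix (Fin n) (Fin n) ℝ) := rfl
  have hKconj : (-r) • K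
      = (↑u : Matrix (Fin n) (Fin n) ℝ)
        * ((-r) • Matrix.diagonal (RCLike.ofReal ∘ hK.eigenvalues))
        * (↑u⁻¹ : Matrix (Fin n) (Fin n) ℝ) := by
    rw [hu1, hu2]
    conv_lhs => rw [hK.spectral_theorem]
    rw [mul_smul_comm, smul_mul_assoc, Unitary.conjStarAlgAut_apply]
  rw [hKconj, Matrix.exp_units_conj]
  have hdiag : (-r) • Matrix.diagonal (RCLike.ofReal ∘ hK.eigenvalues)
      = Matrix.diagonal (fun i => (-r) * hK.eigenvalues i) := by
    rw [← Matrix.diagonal_smul]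
    rfl
  rw [hdiag, Matrix.exp_diagonal]
  have hexp : NormedSpace.exp (fun i => (-r) * hK.eigenvalues i)
      = fun i => Real.exp ((-r) * hK.eigenvalues i) := by
    rw [Pi.exp_def, Real.exp_eq_exp_ℝ]
  rw [hexp, _root_.map_mul, _root_.map_mul]
  have hU2 : star (star (↑U : Matrix (Fin n) (Fin n) ℝ)) * star (↑U : Matrix (Fin n) (Fin n) ℝ)
      = 1 := by rw [star_star]; exact U.2.2
  have hub : ‖Matrix.toEuclideanCLM (n := Fin n) (𝕜 := ℝ) (↑u : Matrix (Fin n) (Fin n) ℝ)‖ ≤ 1 := by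
    rw [hu1]; exact phi_unitary_norm_le _ U.2.1
  have hub' : ‖Matrix.toEuclideanCLM (n := Fin n) (𝕜 := ℝ) (↑u⁻¹ : Matrix (Fin n) (Fin n) ℝ)‖ ≤ 1 := by
    rw [hu2]; exact phi_unitary_norm_le _ hU2
  have hdb : ‖Matrix.toEuclideanCLM (n := Fin n) (𝕜 := ℝ)
      (Matrix.diagonal (fun i => Real.exp ((-r) * hK.eigenvalues i)))‖
      ≤ Real.exp (-(r * lam0)) := by
    refine phi_diagonal_norm_le _ _ (Real.exp_nonneg _) fun i => ?_
    rw [abs_of_nonneg (Real.exp_nonneg _)]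
    refine Real.exp_le_exp.mpr ?_
    have := hmin i
    nlinarith
  refine le_trans (norm_mul_le _ _) ?_
  refine le_trans (mul_le_mul_of_nonneg_right (norm_mul_le _ _) (norm_nonneg _)) ?_
  calc ‖Matrix.toEuclideanCLM (n := Fin n) (𝕜 := ℝ) (↑u : Matrix (Fin n) (Fin n) ℝ)‖
        * ‖Matrix.toEuclideanCLM (n := Fin n) (𝕜 := ℝ)
            (Matrix.diagonal (fun i => Real.exp ((-r) * hK.eigenvalues i)))‖
        * ‖Matrix.toEuclideanCLM (n := Fin n) (𝕜 := ℝ) (↑u⁻¹ : Matrix (Fin n) (Fin n) ℝ)‖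
      ≤ (1 * Real.exp (-(r * lam0))) * 1 := by
        refine mul_le_mul ?_ hub' (norm_nonneg _) (by positivity)
        exact mul_le_mul hub hdb (norm_nonneg _) zero_le_one
    _ = Real.exp (-(r * lam0)) := by ring


/-- Difference of exponentials bound in a Banach algebra, via the mean value inequality applied
to `θ ↦ exp(θ•A) * exp((1-θ)•B)`. -/
lemma exp_sub_exp_norm_le {𝔸 : Type*} [NormedRing 𝔸] [NormedAlgebra ℝ 𝔸] [CompleteSpace 𝔸]
    (A B : 𝔸) (c : ℝ)
    (hbound : ∀ θ : ℝ, θ ∈ Set.Icc (0 : ℝ) 1 →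
      ‖NormedSpace.exp (θ • A)‖ * ‖NormedSpace.exp ((1 - θ) • B)‖ ≤ c) :
    ‖NormedSpace.exp A - NormedSpace.exp B‖ ≤ c * ‖A - B‖ := by
  have hderiv : ∀ θ : ℝ, HasDerivAt
      (fun θ : ℝ => NormedSpace.exp (θ • A) * NormedSpace.exp ((1 - θ) • B))
      (NormedSpace.exp (θ • A) * (A - B) * NormedSpace.exp ((1 - θ) • B)) θ := by
    intro θ
    have h1 := hasDerivAt_exp_smul_const (𝕂 := ℝ) A θ
    have hc : HasDerivAt (fun θ : ℝ => 1 - θ) (-1) θ := by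
      simpa using (hasDerivAt_id θ).const_sub 1
    have h2 : HasDerivAt (fun θ : ℝ => NormedSpace.exp ((1 - θ) • B))
        ((-1 : ℝ) • (NormedSpace.exp ((1 - θ) • B) * B)) θ :=
      (hasDerivAt_exp_smul_const (𝕂 := ℝ) B (1 - θ)).scomp θ hc
    have h3 := h1.mul h2
    convert h3 using 1
    · rfl
    have hcomm : NormedSpace.exp ((1 - θ) • B) * B = B * NormedSpace.exp ((1 - θ) • B) :=
      (((Commute.refl B).smul_left (1 - θ)).exp_left).eq
    rw [hcomm, neg_one_smul, mul_neg]
    noncomm_ring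
  have hbound' : ∀ θ ∈ Set.Ico (0 : ℝ) 1,
      ‖NormedSpace.exp (θ • A) * (A - B) * NormedSpace.exp ((1 - θ) • B)‖
        ≤ c * ‖A - B‖ := by
    intro θ hθ
    have hθ' : θ ∈ Set.Icc (0 : ℝ) 1 := ⟨hθ.1, le_of_lt hθ.2⟩
    refine le_trans (norm_mul_le _ _) ?_
    refine le_trans (mul_le_mul_of_nonneg_right (norm_mul_le _ _) (norm_nonneg _)) ?_
    calc ‖NormedSpace.exp (θ • A)‖ * ‖A - B‖ * ‖NormedSpace.exp ((1 - θ) • B)‖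
        = (‖NormedSpace.exp (θ • A)‖ * ‖NormedSpace.exp ((1 - θ) • B)‖) * ‖A - B‖ := by
          ring
      _ ≤ c * ‖A - B‖ :=
          mul_le_mul_of_nonneg_right (hbound θ hθ') (norm_nonneg _)
  have hmvt := norm_image_sub_le_of_norm_deriv_le_segment'
    (fun x _ => (hderiv x).hasDerivWithinAt) hbound' 1 (Set.right_mem_Icc.mpr zero_le_one)
  simp only [one_smul, sub_self, zero_smul, NormedSpace.exp_zero, one_mul, mul_one,
    sub_zero] at hmvt
  exact hmvt

lemma exp_diff_norm_le (K₁ K₂ : Matrix (Fin n) (Fin n) ℝ)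
    (hK₁ : K₁.IsHermitian) (hK₂ : K₂.IsHermitian) (lam0 : ℝ)
    (hmin₁ : ∀ i, lam0 ≤ hK₁.eigenvalues i) (hmin₂ : ∀ i, lam0 ≤ hK₂.eigenvalues i)
    (s : ℝ) (hs : 0 ≤ s) :
    ‖NormedSpace.exp ((-s) • (Matrix.toEuclideanCLM (n := Fin n) (𝕜 := ℝ) K₁))
        - NormedSpace.exp ((-s) • (Matrix.toEuclideanCLM (n := Fin n) (𝕜 := ℝ) K₂))‖
      ≤ s * Real.exp (-(s * lam0))
          * ‖Matrix.toEuclideanCLM (n := Fin n) (𝕜 := ℝ) K₁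
              - Matrix.toEuclideanCLM (n := Fin n) (𝕜 := ℝ) K₂‖ := by
  set X := Matrix.toEuclideanCLM (n := Fin n) (𝕜 := ℝ) K₁ with hX
  set Yc := Matrix.toEuclideanCLM (n := Fin n) (𝕜 := ℝ) K₂ with hY
  have hb : ∀ θ : ℝ, θ ∈ Set.Icc (0 : ℝ) 1 →
      ‖NormedSpace.exp (θ • ((-s) • X))‖ * ‖NormedSpace.exp ((1 - θ) • ((-s) • Yc))‖
        ≤ Real.exp (-(s * lam0)) := by
    intro θ hθ
    obtain ⟨hθ0, hθ1⟩ := hθ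
    have hA' : θ • ((-s) • X) = (-(θ * s)) • X := by rw [smul_smul]; ring_nf
    have hB' : (1 - θ) • ((-s) • Yc) = (-((1 - θ) * s)) • Yc := by rw [smul_smul]; ring_nf
    have e1 : ‖NormedSpace.exp (θ • ((-s) • X))‖ ≤ Real.exp (-(θ * s * lam0)) := by
      rw [hA', hX]
      exact norm_exp_neg_smul_le K₁ hK₁ lam0 hmin₁ (θ * s) (mul_nonneg hθ0 hs)
    have e2 : ‖NormedSpace.exp ((1 - θ) • ((-s) • Yc))‖
        ≤ Real.exp (-((1 - θ) * s * lam0)) := by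
      rw [hB', hY]
      exact norm_exp_neg_smul_le K₂ hK₂ lam0 hmin₂ ((1 - θ) * s)
        (mul_nonneg (by linarith) hs)
    calc ‖NormedSpace.exp (θ • ((-s) • X))‖ * ‖NormedSpace.exp ((1 - θ) • ((-s) • Yc))‖
        ≤ Real.exp (-(θ * s * lam0)) * Real.exp (-((1 - θ) * s * lam0)) :=
          mul_le_mul e1 e2 (norm_nonneg _) (Real.exp_nonneg _)
      _ = Real.exp (-(s * lam0)) := by
          rw [← Real.exp_add,
            show -(θ * s * lam0) + -((1 - θ) * s * lam0) = -(s * lam0) by ring]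
  have h := exp_sub_exp_norm_le ((-s) • X) ((-s) • Yc) (Real.exp (-(s * lam0))) hb
  have hAB : (-s) • X - (-s) • Yc = (-s) • (X - Yc) := (smul_sub (-s) X Yc).symm
  have hn : ‖(-s) • X - (-s) • Yc‖ = s * ‖X - Yc‖ := by
    have hnsm : ‖(-s) • (X - Yc)‖ = ‖(-s : ℝ)‖ * ‖X - Yc‖ := norm_smul (-s) (X - Yc)
    rw [hAB, hnsm, Real.norm_eq_abs, abs_neg, abs_of_nonneg hs]
  rw [hn] at h
  calc ‖NormedSpace.exp ((-s) • X) - NormedSpace.exp ((-s) • Yc)‖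
      ≤ Real.exp (-(s * lam0)) * (s * ‖X - Yc‖) := h
    _ = s * Real.exp (-(s * lam0)) * ‖X - Yc‖ := by ring

lemma s_exp_le (s lam0 : ℝ) (hs : 0 ≤ s) (hl : 0 < lam0) :
    s * Real.exp (-(s * lam0)) ≤ 1 / (Real.exp 1 * lam0) := by
  have h := Real.add_one_le_exp (s * lam0 - 1)
  have he : Real.exp (s * lam0 - 1) = Real.exp (s * lam0) / Real.exp 1 := Real.exp_sub _ _
  have hp := Real.exp_pos (s * lam0)
  have hp1 := Real.exp_pos 1
  have h2 : s * lam0 ≤ Real.exp (s * lam0) / Real.exp 1 := by rw [he] at h; linarith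
  have h3 : s * lam0 * Real.exp 1 ≤ Real.exp (s * lam0) := (le_div_iff₀ hp1).mp h2
  rw [Real.exp_neg, le_div_iff₀ (by positivity : (0:ℝ) < Real.exp 1 * lam0)]
  have h4 : Real.exp (s * lam0) * (Real.exp (s * lam0))⁻¹ = 1 := mul_inv_cancel₀ hp.ne'
  have h5 := mul_le_mul_of_nonneg_right h3 (inv_nonneg.mpr hp.le)
  nlinarith [h5, h4]

end Aux

/-- Comparison of two kernel gradient flow trajectories
`u(t) = Y + exp(-(t/n)K₁)(u₀ - Y)` and `v(t) = Y + exp(-(t/n)K₂)(v₀ - Y)` driven by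
symmetric kernel matrices whose eigenvalues are all at least `λ₀ > 0`:
uniformly over `t ≥ 0`,
`‖u(t) - v(t)‖₂ ≤ ‖u₀ - v₀‖₂ + (1/(e λ₀)) ‖K₁ - K₂‖ ‖u₀ - Y‖₂`. -/
theorem kernel_gradient_flow_comparison
    (n : ℕ) (K₁ K₂ : Matrix (Fin n) (Fin n) ℝ)
    (hK₁ : K₁.IsHermitian) (hK₂ : K₂.IsHermitian)
    (lam0 : ℝ) (hlam0 : 0 < lam0)
    (hmin₁ : ∀ i, lam0 ≤ hK₁.eigenvalues i) (hmin₂ : ∀ i, lam0 ≤ hK₂.eigenvalues i)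
    (Y u₀ v₀ : Fin n → ℝ) (u v : ℝ → Fin n → ℝ)
    (hu : ∀ t : ℝ, u t = Y + (NormedSpace.exp ((-(t / n)) • K₁)).mulVec (u₀ - Y))
    (hv : ∀ t : ℝ, v t = Y + (NormedSpace.exp ((-(t / n)) • K₂)).mulVec (v₀ - Y)) :
    ∀ t : ℝ, 0 ≤ t →
      eNorm (u t - v t)
        ≤ eNorm (u₀ - v₀) + 1 / (Real.exp 1 * lam0) * opNorm (K₁ - K₂) * eNorm (u₀ - Y) := by
  intro t ht
  have hs : (0 : ℝ) ≤ t / n := div_nonneg ht (Nat.cast_nonneg n)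
  rw [hu t, hv t]
  have hsplit : (Y + (NormedSpace.exp ((-(t / n)) • K₁)).mulVec (u₀ - Y))
        - (Y + (NormedSpace.exp ((-(t / n)) • K₂)).mulVec (v₀ - Y))
      = (NormedSpace.exp ((-(t / n)) • K₂)).mulVec (u₀ - v₀)
        + ((NormedSpace.exp ((-(t / n)) • K₁))
            - (NormedSpace.exp ((-(t / n)) • K₂))).mulVec (u₀ - Y) := by
    simp only [Matrix.sub_mulVec, Matrix.mulVec_sub]
    abel
  rw [hsplit]
  have htriangle : eNorm ((NormedSpace.exp ((-(t / n)) • K₂)).mulVec (u₀ - v₀)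
        + ((NormedSpace.exp ((-(t / n)) • K₁))
            - (NormedSpace.exp ((-(t / n)) • K₂))).mulVec (u₀ - Y))
      ≤ eNorm ((NormedSpace.exp ((-(t / n)) • K₂)).mulVec (u₀ - v₀))
        + eNorm (((NormedSpace.exp ((-(t / n)) • K₁))
            - (NormedSpace.exp ((-(t / n)) • K₂))).mulVec (u₀ - Y)) := by
    rw [eNorm_eq, eNorm_eq, eNorm_eq, WithLp.equiv_symm_apply, WithLp.toLp_add]
    exact norm_add_le _ _
  refine le_trans htriangle (add_le_add ?_ ?_)
  · rw [eNorm_eq, iota_mulVec]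
    refine le_trans (ContinuousLinearMap.le_opNorm _ _) ?_
    rw [← eNorm_eq]
    have h1 : ‖Matrix.toEuclideanCLM (n := Fin n) (𝕜 := ℝ)
        (NormedSpace.exp ((-(t / n)) • K₂))‖ ≤ 1 := by
      rw [phi_exp, _root_.map_smul]
      refine le_trans (norm_exp_neg_smul_le K₂ hK₂ lam0 hmin₂ (t / n) hs) ?_
      have hle : -((t / n) * lam0) ≤ 0 := by nlinarith
      calc Real.exp (-((t / n : ℝ) * lam0)) ≤ Real.exp 0 := Real.exp_le_exp.mpr hle
        _ = 1 := Real.exp_zero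
    calc ‖Matrix.toEuclideanCLM (n := Fin n) (𝕜 := ℝ)
            (NormedSpace.exp ((-(t / n)) • K₂))‖ * eNorm (u₀ - v₀)
        ≤ 1 * eNorm (u₀ - v₀) :=
          mul_le_mul_of_nonneg_right h1 (by rw [eNorm_eq]; exact norm_nonneg _)
      _ = eNorm (u₀ - v₀) := one_mul _
  · rw [eNorm_eq, iota_mulVec]
    refine le_trans (ContinuousLinearMap.le_opNorm _ _) ?_
    rw [← eNorm_eq]
    have h2 : ‖Matrix.toEuclideanCLM (n := Fin n) (𝕜 := ℝ)
        ((NormedSpace.exp ((-(t / n)) • K₁)) - (NormedSpace.exp ((-(t / n)) • K₂)))‖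
        ≤ 1 / (Real.exp 1 * lam0) * opNorm (K₁ - K₂) := by
      rw [_root_.map_sub, phi_exp, phi_exp, _root_.map_smul, _root_.map_smul]
      refine le_trans (exp_diff_norm_le K₁ K₂ hK₁ hK₂ lam0 hmin₁ hmin₂ (t / n) hs) ?_
      have h3 : ‖Matrix.toEuclideanCLM (n := Fin n) (𝕜 := ℝ) K₁
          - Matrix.toEuclideanCLM (n := Fin n) (𝕜 := ℝ) K₂‖ = opNorm (K₁ - K₂) := by
        rw [opNorm_eq, _root_.map_sub]
      rw [h3]
      exact mul_le_mul_of_nonneg_right (s_exp_le (t / n) lam0 hs hlam0)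
        (by rw [opNorm_eq]; exact norm_nonneg _)
    exact mul_le_mul_of_nonneg_right h2 (by rw [eNorm_eq]; exact norm_nonneg _)
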